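/- Let c, d, e, y, t, l, r ∈ ℤ and set x := c + e. Assume x ≠ 0, y ≠ 0, t ∈ {−1, 1}, l ∈ {−1, 1}, r ∈ {0, 2} with r = 2 only if t = 1, x·y − l > 0, and d·(x·y − l) = t·x − e·(c·y + r). Then: (1) if d·e > 0 and c·x > 0, then c and e have the same sign, |c| = 1 or |e| = 1, t = 1, r = 0, and |y| = 1; (2) if d·e < 0, then c·y + r ≥ 0. (Paper: Corollary 4.3.) -/
import Mathlib


/-- **Corollary 4.3.** With `x := c + e`, assume `x ≠ 0`, `y ≠ 0`, `t, l ∈ {−1, 1}`,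
`r ∈ {0, 2}` with `r = 2` only if `t = 1`, `x·y − l > 0`, and
`d·(x·y − l) = t·x − e·(c·y + r)`. Then:
(1) if `d·e > 0` and `c·x > 0`, then `c` and `e` have the same sign, `|c| = 1` or
`|e| = 1`, `t = 1`, `r = 0` and `|y| = 1`;
(2) if `d·e < 0`, then `c·y + r ≥ 0`. -/
theorem eschenburg_integrality_corollary
    (c d e y t l r : ℤ)
    (hx : c + e ≠ 0) (hy : y ≠ 0)
    (ht : t = -1 ∨ t = 1) (hl : l = -1 ∨ l = 1)
    (hr : r = 0 ∨ (r = 2 ∧ t = 1))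
    (hpos : 0 < (c + e) * y - l)
    (heq : d * ((c + e) * y - l) = t * (c + e) - e * (c * y + r)) :
    (d * e > 0 → c * (c + e) > 0 →
      c * e > 0 ∧ (|c| = 1 ∨ |e| = 1) ∧ t = 1 ∧ r = 0 ∧ |y| = 1) ∧
    (d * e < 0 → 0 ≤ c * y + r) := by
  have hr0 : 0 ≤ r := by rcases hr with h | ⟨h, _⟩ <;> omega
  have hr2 : r ≤ 2 := by rcases hr with h | ⟨h, _⟩ <;> omega
  have htl : -1 ≤ t ∧ t ≤ 1 := by rcases ht with h | h <;> omega
  have hll : -1 ≤ l ∧ l ≤ 1 := by rcases hl with h | h <;> omega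
  have hD : 1 ≤ (c + e) * y - l := hpos
  have hsign : (0 < c + e ∧ 0 < y) ∨ (c + e < 0 ∧ y < 0) := by
    rcases hx.lt_or_gt with h1 | h1 <;> rcases hy.lt_or_gt with h2 | h2
    · exact Or.inr ⟨h1, h2⟩
    · exfalso; linarith [mul_pos (by linarith : (0:ℤ) < -(c+e)) h2]
    · exfalso; linarith [mul_pos h1 (by linarith : (0:ℤ) < -y)]
    · exact Or.inl ⟨h1, h2⟩
  constructor
  · intro hde hcx
    rcases hsign with ⟨hx1, hy1⟩ | ⟨hx1, hy1⟩
    · -- x > 0, y > 0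
      have hx1' : 1 ≤ c + e := hx1
      have hy1' : 1 ≤ y := hy1
      have hc : 1 ≤ c := by
        by_contra h'
        push_neg at h'
        linarith [mul_nonneg (by linarith : (0:ℤ) ≤ -c) (le_of_lt hx1)]
      have he : 1 ≤ e := by
        by_contra h'
        push_neg at h'
        have he0 : e ≤ -1 := by
          rcases eq_or_ne e 0 with h | h
          · subst h; simp at hde
          · omega
        have hd : d ≤ -1 := by
          by_contra h''
          push_neg at h''
          linarith [mul_nonneg (by linarith : (0:ℤ) ≤ d) (by linarith : (0:ℤ) ≤ -e)]
        have hc2 : 2 ≤ c := by linarith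
        have hcy : c ≤ c * y := by linarith [mul_nonneg (by linarith : (0:ℤ) ≤ c) (by linarith : (0:ℤ) ≤ y - 1)]
        have hs0 : (0:ℤ) ≤ c * y + r := by linarith
        linarith [mul_nonneg (by linarith : (0:ℤ) ≤ t + 1) (by linarith : (0:ℤ) ≤ c + e),
                   mul_nonneg (by linarith : (0:ℤ) ≤ -e - 1) hs0,
                   mul_nonneg (by linarith : (0:ℤ) ≤ c + e) (by linarith : (0:ℤ) ≤ y - 1),
                   mul_nonneg (by linarith : (0:ℤ) ≤ -d - 1) (by linarith : (0:ℤ) ≤ (c+e)*y - l)]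
      have hd : 1 ≤ d := by
        by_contra h''
        push_neg at h''
        linarith [mul_nonneg (by linarith : (0:ℤ) ≤ -d) (by linarith : (0:ℤ) ≤ e)]
      have hce : 1 ≤ c * e := by
        linarith [mul_nonneg (by linarith : (0:ℤ) ≤ c - 1) (by linarith : (0:ℤ) ≤ e - 1)]
      have hkey : c * e ≤ l := by
        linarith [mul_nonneg (by linarith : (0:ℤ) ≤ d - 1) (by linarith : (0:ℤ) ≤ (c+e)*y - l),
                   mul_nonneg (by linarith : (0:ℤ) ≤ 1 - t) (by linarith : (0:ℤ) ≤ c + e),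
                   mul_nonneg (by linarith : (0:ℤ) ≤ c + e) (by linarith : (0:ℤ) ≤ y - 1),
                   mul_nonneg (by linarith : (0:ℤ) ≤ c * e) (by linarith : (0:ℤ) ≤ y - 1),
                   mul_nonneg (by linarith : (0:ℤ) ≤ e) hr0]
      have hc1 : c = 1 := by
        linarith [mul_nonneg (by linarith : (0:ℤ) ≤ c) (by linarith : (0:ℤ) ≤ e - 1)]
      have he1 : e = 1 := by
        linarith [mul_nonneg (by linarith : (0:ℤ) ≤ c - 1) (by linarith : (0:ℤ) ≤ e)]
      subst hc1; subst he1
      have hdD : (1+1)*y - l ≤ d * ((1+(1:ℤ))*y - l) := by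
        linarith [mul_nonneg (by linarith : (0:ℤ) ≤ d - 1) (by linarith : (0:ℤ) ≤ (1+(1:ℤ))*y - l)]
      have hlin : 3*y ≤ 2*t + l - r := by linarith [heq, hdD]
      have hfin : y = 1 ∧ t = 1 ∧ r = 0 := by omega
      exact ⟨by norm_num, Or.inl (by norm_num), hfin.2.1, hfin.2.2, by rw [hfin.1]; norm_num⟩
    · -- x < 0, y < 0
      have hx1' : c + e ≤ -1 := by omega
      have hy1' : y ≤ -1 := by omega
      have hc : c ≤ -1 := by
        by_contra h'
        push_neg at h'
        linarith [mul_nonneg (by linarith : (0:ℤ) ≤ c) (by linarith : (0:ℤ) ≤ -(c+e))]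
      have he : e ≤ -1 := by
        by_contra h'
        push_neg at h'
        have he0 : 1 ≤ e := by
          rcases eq_or_ne e 0 with h | h
          · subst h; simp at hde
          · omega
        have hd : 1 ≤ d := by
          by_contra h''
          push_neg at h''
          linarith [mul_nonneg (by linarith : (0:ℤ) ≤ -d) (by linarith : (0:ℤ) ≤ e)]
        have hc2 : c ≤ -2 := by linarith
        have hcy : -c ≤ c * y := by
          linarith [mul_nonneg (by linarith : (0:ℤ) ≤ -c) (by linarith : (0:ℤ) ≤ -y - 1)]
        have hs0 : (0:ℤ) ≤ c * y + r := by linarith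
        linarith [mul_nonneg (by linarith : (0:ℤ) ≤ t + 1) (by linarith : (0:ℤ) ≤ -(c+e)),
                   mul_nonneg (by linarith : (0:ℤ) ≤ e - 1) hs0,
                   mul_nonneg (by linarith : (0:ℤ) ≤ -(c+e)) (by linarith : (0:ℤ) ≤ -y - 1),
                   mul_nonneg (by linarith : (0:ℤ) ≤ d - 1) (by linarith : (0:ℤ) ≤ (c+e)*y - l)]
      have hd : d ≤ -1 := by
        by_contra h''
        push_neg at h''
        linarith [mul_nonneg (by linarith : (0:ℤ) ≤ d) (by linarith : (0:ℤ) ≤ -e)]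
      have hce : 1 ≤ c * e := by
        linarith [mul_nonneg (by linarith : (0:ℤ) ≤ -c - 1) (by linarith : (0:ℤ) ≤ -e - 1)]
      have hkey : c * e ≤ l := by
        linarith [mul_nonneg (by linarith : (0:ℤ) ≤ -d - 1) (by linarith : (0:ℤ) ≤ (c+e)*y - l),
                   mul_nonneg (by linarith : (0:ℤ) ≤ 1 - t) (by linarith : (0:ℤ) ≤ -(c+e)),
                   mul_nonneg (by linarith : (0:ℤ) ≤ -(c+e)) (by linarith : (0:ℤ) ≤ -y - 1),
                   mul_nonneg (by linarith : (0:ℤ) ≤ c * e) (by linarith : (0:ℤ) ≤ -y - 1),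
                   mul_nonneg (by linarith : (0:ℤ) ≤ -e) hr0]
      have he1 : e = -1 := by
        linarith [mul_nonneg (by linarith : (0:ℤ) ≤ -c - 1) (by linarith : (0:ℤ) ≤ -e)]
      subst he1
      have hc1 : c = -1 := by linarith
      subst hc1
      have hdD : d * ((-1 + -(1:ℤ))*y - l) ≤ -((-1 + -(1:ℤ))*y - l) := by
        linarith [mul_nonneg (by linarith : (0:ℤ) ≤ -d - 1) (by linarith : (0:ℤ) ≤ (-1 + -(1:ℤ))*y - l)]
      have hlin : -2*t + r - l ≤ 3*y := by linarith [heq, hdD]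
      have hfin : y = -1 ∧ t = 1 ∧ r = 0 := by omega
      exact ⟨by norm_num, Or.inl (by norm_num), hfin.2.1, hfin.2.2, by rw [hfin.1]; norm_num⟩
  · intro hde
    by_contra hscon
    push_neg at hscon
    have hs : c * y + r ≤ -1 := by linarith [Int.add_one_le_iff.mpr hscon]
    have hde' : d * e ≤ -1 := by linarith [Int.add_one_le_iff.mpr hde]
    rcases hsign with ⟨hx1, hy1⟩ | ⟨hx1, hy1⟩
    · -- x > 0, y > 0
      have hx1' : 1 ≤ c + e := hx1
      have hy1' : 1 ≤ y := hy1
      have hc : c ≤ -1 := by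
        by_contra h'
        push_neg at h'
        linarith [mul_nonneg (by linarith : (0:ℤ) ≤ c) (by linarith : (0:ℤ) ≤ y)]
      have he : 2 ≤ e := by linarith
      have hd : d ≤ -1 := by
        by_contra h''
        push_neg at h''
        linarith [mul_nonneg (by linarith : (0:ℤ) ≤ d) (by linarith : (0:ℤ) ≤ e)]
      rcases ht with ht1 | ht1 <;> subst ht1
      · -- t = -1
        have hrr : r = 0 := by rcases hr with h | ⟨_, h⟩ <;> omega
        subst hrr
        have hcy1 : c * y ≤ -1 := by linarith
        have hec : e * c ≤ -2 := by
          linarith [mul_nonneg (by linarith : (0:ℤ) ≤ e - 2) (by linarith : (0:ℤ) ≤ -c - 1)]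
        have he2cy : e * e * (c * y) ≤ -(e * e) := by
          linarith [mul_nonneg (mul_self_nonneg e) (by linarith : (0:ℤ) ≤ -(c * y) - 1)]
        have heqe : e * (d * ((c+e)*y - l)) = e * ((-1) * (c + e) - e * (c*y + 0)) := by rw [heq]
        have hdeD : d * e * ((c+e)*y - l) ≤ -((c+e)*y - l) := by
          linarith [mul_le_mul_of_nonneg_right hde' (le_of_lt hpos)]
        linarith [heqe, hdeD, hec, he2cy, hD]
      · -- t = 1
        have h1 : d * ((c+e)*y - l) ≤ -1 := by
          linarith [mul_nonneg (by linarith : (0:ℤ) ≤ -d - 1) (by linarith : (0:ℤ) ≤ (c+e)*y - l)]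
        have h2 : e * (c*y + r) ≤ -2 := by
          linarith [mul_nonneg (by linarith : (0:ℤ) ≤ e) (by linarith : (0:ℤ) ≤ -(c*y+r) - 1)]
        linarith [heq, h1, h2]
    · -- x < 0, y < 0
      have hx1' : c + e ≤ -1 := by omega
      have hy1' : y ≤ -1 := by omega
      have hc : 1 ≤ c := by
        by_contra h'
        push_neg at h'
        linarith [mul_nonneg (by linarith : (0:ℤ) ≤ -c) (by linarith : (0:ℤ) ≤ -y)]
      have he : e ≤ -2 := by linarith
      have hd : 1 ≤ d := by
        by_contra h''
        push_neg at h''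
        linarith [mul_nonneg (by linarith : (0:ℤ) ≤ -d) (by linarith : (0:ℤ) ≤ -e)]
      rcases ht with ht1 | ht1 <;> subst ht1
      · -- t = -1
        have hrr : r = 0 := by rcases hr with h | ⟨_, h⟩ <;> omega
        subst hrr
        have hcy1 : c * y ≤ -1 := by linarith
        have hec : e * c ≤ -2 := by
          linarith [mul_nonneg (by linarith : (0:ℤ) ≤ -e - 2) (by linarith : (0:ℤ) ≤ c - 1)]
        have he2cy : e * e * (c * y) ≤ -(e * e) := by
          linarith [mul_nonneg (mul_self_nonneg e) (by linarith : (0:ℤ) ≤ -(c * y) - 1)]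
        have heqe : e * (d * ((c+e)*y - l)) = e * ((-1) * (c + e) - e * (c*y + 0)) := by rw [heq]
        have hdeD : d * e * ((c+e)*y - l) ≤ -((c+e)*y - l) := by
          linarith [mul_le_mul_of_nonneg_right hde' (le_of_lt hpos)]
        linarith [heqe, hdeD, hec, he2cy, hD]
      · -- t = 1
        have h1 : 1 ≤ d * ((c+e)*y - l) := by
          linarith [mul_nonneg (by linarith : (0:ℤ) ≤ d - 1) (by linarith : (0:ℤ) ≤ (c+e)*y - l)]
        have h2 : 2 ≤ e * (c*y + r) := by
          linarith [mul_nonneg (by linarith : (0:ℤ) ≤ -e - 2) (by linarith : (0:ℤ) ≤ -(c*y+r) - 1)]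
        linarith [heq, h1, h2]
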